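/- Let H be a finite-dimensional real inner product space, let Y1, …, Yn ∈ H with weights w1, …, wn > 0, and τ ∈ H with ‖τ‖ < 1. Define ĝ(Q) = Σᵢ wᵢ(‖Q − Yᵢ‖ − ⟨τ, Q⟩). If Q* minimizes ĝ and the set I = {i : Yᵢ = Q*} is nonempty, then ‖Σ_{i∉I} wᵢ[(Q* − Yᵢ)/‖Q* − Yᵢ‖ − τ]‖ ≤ (1 + ‖τ‖) Σ_{i∈I} wᵢ. -/

import Mathlib

open scoped RealInnerProductSpace Classical

private lemma norm_add_smul_le' {H : Type*} [NormedAddCommGroup H] [InnerProductSpace ℝ H]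
    (a h : H) (ha : a ≠ 0) (t : ℝ) :
    ‖a + t • h‖ ≤ ‖a‖ + t * ⟪‖a‖⁻¹ • a, h⟫ + t^2 * ‖h‖^2 / (2 * ‖a‖) := by
  have hna : 0 < ‖a‖ := norm_pos_iff.mpr ha
  have hexp : ‖a + t • h‖^2 = ‖a‖^2 + 2 * (t * ⟪a, h⟫) + t^2 * ‖h‖^2 := by
    rw [norm_add_sq_real]
    simp [inner_smul_right, norm_smul, mul_pow]
  have hinner : ⟪‖a‖⁻¹ • a, h⟫ = ⟪a, h⟫ / ‖a‖ := by
    rw [real_inner_smul_left]; ring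
  rw [hinner]
  have hrw : ‖a‖ + t * (⟪a, h⟫ / ‖a‖) + t^2 * ‖h‖^2 / (2 * ‖a‖)
      = (‖a‖^2 + t * ⟪a, h⟫ + t^2 * ‖h‖^2 / 2) / ‖a‖ := by
    field_simp
  rw [hrw, le_div_iff₀ hna]
  nlinarith [sq_nonneg (‖a + t • h‖ - ‖a‖), hexp]


/-- First-order condition at a minimizer of the weighted spatial-quantile
objective when the minimizer coincides with some data points: the norm of the sum
of unit-vector residuals over the other points is bounded by
`(1 + ‖τ‖)` times the total weight of the coinciding points. -/
theorem sample_quantile_atom_condition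
    {H : Type*} [NormedAddCommGroup H] [InnerProductSpace ℝ H]
    [FiniteDimensional ℝ H]
    {n : ℕ} (Y : Fin n → H) (w : Fin n → ℝ) (hw : ∀ i, 0 < w i)
    (τ : H) (hτ : ‖τ‖ < 1) (Qs : H)
    (hmin : IsMinOn (fun Q : H => ∑ i, w i * (‖Q - Y i‖ - ⟪τ, Q⟫)) Set.univ Qs)
    (hI : ∃ i, Y i = Qs) :
    ‖∑ i ∈ Finset.univ.filter (fun i => Y i ≠ Qs),
        w i • (‖Qs - Y i‖⁻¹ • (Qs - Y i) - τ)‖ ≤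
      (1 + ‖τ‖) * ∑ i ∈ Finset.univ.filter (fun i => Y i = Qs), w i := by
  classical
  set A := Finset.univ.filter (fun i => Y i = Qs) with hA
  set B := Finset.univ.filter (fun i => Y i ≠ Qs) with hB
  set S : H := ∑ i ∈ B, w i • (‖Qs - Y i‖⁻¹ • (Qs - Y i) - τ) with hSdef
  -- key directional inequality
  have key : ∀ h : H,
      0 ≤ (∑ i ∈ A, w i * (‖h‖ - ⟪τ, h⟫))
        + ∑ i ∈ B, w i * (⟪‖Qs - Y i‖⁻¹ • (Qs - Y i), h⟫ - ⟪τ, h⟫) := by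
    intro h
    set K : ℝ := (∑ i ∈ A, w i * (‖h‖ - ⟪τ, h⟫))
        + ∑ i ∈ B, w i * (⟪‖Qs - Y i‖⁻¹ • (Qs - Y i), h⟫ - ⟪τ, h⟫) with hK
    set C : ℝ := ∑ i ∈ B, w i * (‖h‖^2 / (2 * ‖Qs - Y i‖)) with hC
    have hCnn : 0 ≤ C := by
      refine Finset.sum_nonneg fun i hi => ?_
      have : (0:ℝ) ≤ ‖h‖^2 / (2 * ‖Qs - Y i‖) := by positivity
      exact mul_nonneg (hw i).le this
    have hlin : ∀ t : ℝ, 0 < t → 0 ≤ t * K + t^2 * C := by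
      intro t ht
      have h0 : (∑ i, w i * (‖Qs - Y i‖ - ⟪τ, Qs⟫))
          ≤ ∑ i, w i * (‖Qs + t • h - Y i‖ - ⟪τ, Qs + t • h⟫) :=
        hmin (Set.mem_univ (Qs + t • h))
      have hdiff : (∑ i, w i * (‖Qs + t • h - Y i‖ - ⟪τ, Qs + t • h⟫))
          - (∑ i, w i * (‖Qs - Y i‖ - ⟪τ, Qs⟫))
          = ∑ i, w i * (‖Qs + t • h - Y i‖ - ‖Qs - Y i‖ - t * ⟪τ, h⟫) := by
        rw [← Finset.sum_sub_distrib]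
        refine Finset.sum_congr rfl fun i _ => ?_
        rw [inner_add_right, real_inner_smul_right]
        ring
      have hnn : (0:ℝ) ≤ ∑ i, w i * (‖Qs + t • h - Y i‖ - ‖Qs - Y i‖ - t * ⟪τ, h⟫) := by
        rw [← hdiff]; linarith
      have hsplit : (∑ i, w i * (‖Qs + t • h - Y i‖ - ‖Qs - Y i‖ - t * ⟪τ, h⟫))
          = (∑ i ∈ A, w i * (‖Qs + t • h - Y i‖ - ‖Qs - Y i‖ - t * ⟪τ, h⟫))
          + ∑ i ∈ B, w i * (‖Qs + t • h - Y i‖ - ‖Qs - Y i‖ - t * ⟪τ, h⟫) :=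
        (Finset.sum_filter_add_sum_filter_not _ _ _).symm
      have hAbound : (∑ i ∈ A, w i * (‖Qs + t • h - Y i‖ - ‖Qs - Y i‖ - t * ⟪τ, h⟫))
          = ∑ i ∈ A, w i * (t * (‖h‖ - ⟪τ, h⟫)) := by
        refine Finset.sum_congr rfl fun i hi => ?_
        have hYi : Y i = Qs := (Finset.mem_filter.mp hi).2
        have e1 : Qs + t • h - Y i = t • h := by rw [hYi]; abel
        have e2 : Qs - Y i = 0 := by rw [hYi]; abel
        rw [e1, e2, norm_zero, norm_smul, Real.norm_eq_abs, abs_of_pos ht]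
        ring
      have hBbound : (∑ i ∈ B, w i * (‖Qs + t • h - Y i‖ - ‖Qs - Y i‖ - t * ⟪τ, h⟫))
          ≤ ∑ i ∈ B, w i * (t * (⟪‖Qs - Y i‖⁻¹ • (Qs - Y i), h⟫ - ⟪τ, h⟫)
              + t^2 * (‖h‖^2 / (2 * ‖Qs - Y i‖))) := by
        refine Finset.sum_le_sum fun i hi => ?_
        have hYi : Y i ≠ Qs := (Finset.mem_filter.mp hi).2
        have hne : Qs - Y i ≠ 0 := sub_ne_zero.mpr (Ne.symm hYi)
        have hle := norm_add_smul_le' (Qs - Y i) h hne t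
        have harr : Qs + t • h - Y i = (Qs - Y i) + t • h := by abel
        rw [harr]
        refine mul_le_mul_of_nonneg_left ?_ (hw i).le
        have heq : t^2 * ‖h‖^2 / (2 * ‖Qs - Y i‖) = t^2 * (‖h‖^2 / (2 * ‖Qs - Y i‖)) := by
          ring
        rw [heq] at hle
        linarith
      have e1 : (∑ i ∈ A, w i * (t * (‖h‖ - ⟪τ, h⟫)))
          = t * ∑ i ∈ A, w i * (‖h‖ - ⟪τ, h⟫) := by
        rw [Finset.mul_sum]; exact Finset.sum_congr rfl fun i _ => by ring
      have e2 : (∑ i ∈ B, w i * (t * (⟪‖Qs - Y i‖⁻¹ • (Qs - Y i), h⟫ - ⟪τ, h⟫)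
              + t^2 * (‖h‖^2 / (2 * ‖Qs - Y i‖))))
          = t * (∑ i ∈ B, w i * (⟪‖Qs - Y i‖⁻¹ • (Qs - Y i), h⟫ - ⟪τ, h⟫))
            + t^2 * ∑ i ∈ B, w i * (‖h‖^2 / (2 * ‖Qs - Y i‖)) := by
        rw [Finset.mul_sum, Finset.mul_sum, ← Finset.sum_add_distrib]
        exact Finset.sum_congr rfl fun i _ => by ring
      have goal_eq : t * K + t^2 * C
          = (∑ i ∈ A, w i * (t * (‖h‖ - ⟪τ, h⟫)))
            + ∑ i ∈ B, w i * (t * (⟪‖Qs - Y i‖⁻¹ • (Qs - Y i), h⟫ - ⟪τ, h⟫)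
              + t^2 * (‖h‖^2 / (2 * ‖Qs - Y i‖))) := by
        rw [hK, hC, e1, e2]; ring
      rw [goal_eq]
      linarith [hnn, hsplit, hAbound, hBbound]
    -- conclude 0 ≤ K
    by_contra hneg
    push_neg at hneg
    have hC1 : 0 < C + 1 := by linarith
    have ht : 0 < -K / (C + 1) := div_pos (neg_pos.mpr hneg) hC1
    have h2' := hlin _ ht
    have h2 : 0 ≤ K + (-K / (C + 1)) * C := by
      have := (mul_nonneg_iff_of_pos_left ht).mp (by nlinarith [h2'] : 0 ≤ (-K / (C + 1)) * (K + (-K / (C + 1)) * C))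
      exact this
    have h3 : (-K / (C + 1)) * (C + 1) = -K := div_mul_cancel₀ _ (ne_of_gt hC1)
    nlinarith [mul_nonneg h2 hC1.le, h3]
  -- apply with h = -S
  have hSh : ∀ h : H, (∑ i ∈ B, w i * (⟪‖Qs - Y i‖⁻¹ • (Qs - Y i), h⟫ - ⟪τ, h⟫)) = ⟪S, h⟫ := by
    intro h
    rw [hSdef, sum_inner]
    refine Finset.sum_congr rfl fun i _ => ?_
    simp [real_inner_smul_left, inner_sub_left]
  have hkey := key (-S)
  rw [hSh (-S)] at hkey
  have hSS : ⟪S, -S⟫ = -(‖S‖^2) := by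
    rw [inner_neg_right, real_inner_self_eq_norm_sq]
  rw [hSS] at hkey
  have hWA : (0:ℝ) ≤ ∑ i ∈ A, w i := Finset.sum_nonneg fun i _ => (hw i).le
  have hAsum : (∑ i ∈ A, w i * (‖-S‖ - ⟪τ, -S⟫)) = (∑ i ∈ A, w i) * (‖S‖ + ⟪τ, S⟫) := by
    rw [Finset.sum_mul]
    exact Finset.sum_congr rfl fun i _ => by
      rw [norm_neg, inner_neg_right]; ring
  rw [hAsum] at hkey
  have hCS : ⟪τ, S⟫ ≤ ‖τ‖ * ‖S‖ := real_inner_le_norm τ S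
  by_cases hS0 : ‖S‖ = 0
  · rw [hS0]
    have : (0:ℝ) < 1 + ‖τ‖ := by positivity
    exact mul_nonneg this.le hWA
  · have hSpos : 0 < ‖S‖ := lt_of_le_of_ne (norm_nonneg S) (Ne.symm hS0)
    have h1 : ‖S‖^2 ≤ (∑ i ∈ A, w i) * ((1 + ‖τ‖) * ‖S‖) := by
      nlinarith [hkey, hCS, hWA]
    nlinarith [h1, hSpos]
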